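/- For all integers n, t and l with 0 < t < n − 2 and n/(n−t−2) ≤ l ≤ n, the single-exclusion number satisfies S(n,t) ≤ (1/l)·binom(n,t) + l·⌈n/l⌉·binom(n−⌊n/l⌋−1, t), where binom(a,b) denotes the binomial coefficient (equal to 0 when b < 0 or b > a). -/
import Mathlib


/-- An `(n,t)`-single-exclusion system: a collection of `t`-subsets (blocks) of an
`n`-set such that every subset `X` with `1 ≤ |X| ≤ t+1` has a block containing all
but exactly one element of `X`. -/
def IsSESystem (n t : ℕ) (S : Finset (Finset (Fin n))) : Prop :=
  (∀ B ∈ S, B.card = t) ∧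
  ∀ X : Finset (Fin n), 1 ≤ X.card → X.card ≤ t + 1 → ∃ B ∈ S, (X \ B).card = 1

/-- The `(n,t)`-single-exclusion number `S(n,t)`: the least number of blocks in an
`(n,t)`-single-exclusion system. -/
noncomputable def SENumber (n t : ℕ) : ℕ :=
  sInf {m : ℕ | ∃ S : Finset (Finset (Fin n)), IsSESystem n t S ∧ S.card = m}

-- weight function: block index of x
def seW (n l : ℕ) (x : Fin n) : ℕ := x.val * l / n

-- residue family
def seA (n t l c : ℕ) : Finset (Finset (Fin n)) :=
  (Finset.powersetCard t (Finset.univ : Finset (Fin n))).filter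
    (fun T => (∑ y ∈ T, seW n l y) % l = c)

-- window at position a of length m+1 (as subset of Fin n)
def seWin (n m a : ℕ) : Finset (Fin n) :=
  Finset.univ.filter (fun y => a ≤ y.val ∧ y.val ≤ a + m)

-- window family: t-subsets avoiding the window
def seD (n t m a : ℕ) : Finset (Finset (Fin n)) :=
  Finset.powersetCard t (Finset.univ \ seWin n m a)

lemma seWin_card {n m a : ℕ} (h : a + m < n) : (seWin n m a).card = m + 1 := by
  have he : seWin n m a = (Finset.Icc a (a + m)).attachFin
      (by intro x hx; rw [Finset.mem_Icc] at hx; omega) := by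
    ext y
    simp [seWin, Finset.mem_attachFin, Finset.mem_Icc]
  rw [he, Finset.card_attachFin, Nat.card_Icc]
  omega

lemma seD_card {n t m a : ℕ} (h : a + m < n) :
    (seD n t m a).card = (n - m - 1).choose t := by
  rw [seD, Finset.card_powersetCard, Finset.card_sdiff_of_subset (Finset.subset_univ _),
    seWin_card h, Finset.card_univ, Fintype.card_fin]
  congr 1

-- pigeonhole: a residue class of size ≤ C(n,t)/l
lemma seA_small (n t l : ℕ) (hl : 0 < l) :
    ∃ c < l, l * (seA n t l c).card ≤ n.choose t := by
  by_contra hcon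
  push_neg at hcon
  have hfib : (Finset.powersetCard t (Finset.univ : Finset (Fin n))).card
      = ∑ c ∈ Finset.range l, (seA n t l c).card := by
    apply Finset.card_eq_sum_card_fiberwise
    intro T _
    exact Finset.mem_range.mpr (Nat.mod_lt _ hl)
  have hc : (Finset.powersetCard t (Finset.univ : Finset (Fin n))).card = n.choose t := by
    rw [Finset.card_powersetCard, Finset.card_univ, Fintype.card_fin]
  have hlt : ∀ c ∈ Finset.range l, n.choose t < l * (seA n t l c).card := by
    intro c hc
    exact hcon c (Finset.mem_range.mp hc)
  have hsum : ∑ c ∈ Finset.range l, n.choose t < ∑ c ∈ Finset.range l, l * (seA n t l c).card :=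
    Finset.sum_lt_sum_of_nonempty (Finset.nonempty_range_iff.mpr (by omega)) hlt
  rw [Finset.sum_const, Finset.card_range, ← Finset.mul_sum, ← hfib, hc, smul_eq_mul] at hsum
  omega

lemma seW_eq_iff {n l ρ : ℕ} (hn : 0 < n) (y : Fin n) :
    seW n l y = ρ ↔ (ρ * n ≤ y.val * l ∧ y.val * l < ρ * n + n) := by
  unfold seW
  constructor
  · rintro rfl
    have h1 := Nat.div_add_mod (y.val * l) n
    rw [Nat.mul_comm] at h1
    have h2 := Nat.mod_lt (y.val * l) hn
    omega
  · rintro ⟨h1, h2⟩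
    have ha : ρ ≤ y.val * l / n := (Nat.le_div_iff_mul_le hn).mpr h1
    have hb : y.val * l / n < ρ + 1 :=
      Nat.div_lt_of_lt_mul (by rw [Nat.mul_succ, Nat.mul_comm n ρ]; omega)
    omega

-- If no window isolates a point of X, then X meets every weight class.
lemma seDense {n l m : ℕ} (hl : 0 < l) (hml : m * l ≤ n) (X : Finset (Fin n)) (hX : X.Nonempty)
    (hiso : ∀ a, a + m < n → (X ∩ seWin n m a).card ≠ 1)
    {ρ : ℕ} (hρ : ρ < l) : ∃ x ∈ X, seW n l x = ρ := by
  by_contra hcon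
  push_neg at hcon
  have hn : 0 < n := Fin.pos (hX.choose)
  have hsplit : ∀ y ∈ X, y.val * l < ρ * n ∨ ρ * n + n ≤ y.val * l := by
    intro y hy
    by_contra hcontra
    push_neg at hcontra
    exact hcon y hy ((seW_eq_iff hn y).mpr ⟨hcontra.1, hcontra.2⟩)
  classical
  rcases (X.filter (fun y => y.val * l < ρ * n)).eq_empty_or_nonempty with hPe | hPne
  · -- all of X is to the right of the ρ-block
    have hQ : ∀ y ∈ X, ρ * n + n ≤ y.val * l := by
      intro y hy
      rcases hsplit y hy with h | h
      · exfalso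
        have hyP : y ∈ X.filter (fun y => y.val * l < ρ * n) := Finset.mem_filter.mpr ⟨hy, h⟩
        rw [hPe] at hyP
        exact Finset.notMem_empty y hyP
      · exact h
    obtain ⟨p, hpX, hpmin⟩ : ∃ p ∈ X, ∀ y ∈ X, p ≤ y :=
      ⟨X.min' hX, X.min'_mem hX, fun y hy => X.min'_le y hy⟩
    have hpl : n ≤ p.val * l := by have := hQ p hpX; omega
    have hmp : m ≤ p.val := Nat.le_of_mul_le_mul_right (hml.trans hpl) hl
    have hpn : p.val < n := p.isLt
    apply hiso (p.val - m) (by omega)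
    have hsing : X ∩ seWin n m (p.val - m) = {p} := by
      ext y
      simp only [Finset.mem_inter, seWin, Finset.mem_filter, Finset.mem_univ, true_and,
        Finset.mem_singleton]
      constructor
      · rintro ⟨hyX, _, hy2⟩
        have hmin : p.val ≤ y.val := Fin.le_iff_val_le_val.mp (hpmin y hyX)
        exact Fin.ext (by omega)
      · rintro rfl
        exact ⟨hpX, by omega, by omega⟩
    rw [hsing, Finset.card_singleton]
  · -- there are elements to the left of the ρ-block
    obtain ⟨p, hpP, hpmax⟩ : ∃ p ∈ X.filter (fun y => y.val * l < ρ * n),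
        ∀ y ∈ X.filter (fun y => y.val * l < ρ * n), y ≤ p :=
      ⟨_, (X.filter _).max'_mem hPne, fun y hy => (X.filter _).le_max' y hy⟩
    have hpX : p ∈ X := (Finset.mem_filter.mp hpP).1
    have hpl : p.val * l < ρ * n := (Finset.mem_filter.mp hpP).2
    have hwin : (p.val + m) * l < ρ * n + n := by
      have hd : (p.val + m) * l = p.val * l + m * l := by ring
      omega
    have hwn : p.val + m < n := by
      have h1 : (p.val + m) * l < n * l := by
        have h2 : (ρ + 1) * n ≤ l * n := Nat.mul_le_mul_right n hρ
        have h3 : (ρ + 1) * n = ρ * n + n := by ring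
        have h4 : l * n = n * l := Nat.mul_comm l n
        omega
      exact Nat.lt_of_mul_lt_mul_right h1
    apply hiso p.val hwn
    have hsing : X ∩ seWin n m p.val = {p} := by
      ext y
      simp only [Finset.mem_inter, seWin, Finset.mem_filter, Finset.mem_univ, true_and,
        Finset.mem_singleton]
      constructor
      · rintro ⟨hyX, hy1, hy2⟩
        rcases hsplit y hyX with h | h
        · have hle : y ≤ p := hpmax y (Finset.mem_filter.mpr ⟨hyX, h⟩)
          have hle' : y.val ≤ p.val := Fin.le_iff_val_le_val.mp hle
          exact Fin.ext (by omega)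
        · exfalso
          have hmul : y.val * l ≤ (p.val + m) * l := Nat.mul_le_mul_right l hy2
          omega
      · rintro rfl
        exact ⟨hpX, by omega, by omega⟩
    rw [hsing, Finset.card_singleton]

lemma se_system (n t l m c : ℕ) (hl : 0 < l) (hm : m = n / l) (hmt : m + t + 2 ≤ n)
    (hc : c < l) :
    IsSESystem n t
      ((seA n t l c) ∪ (Finset.range (n - m)).biUnion (fun a => seD n t m a)) := by
  classical
  constructor
  · intro B hB
    rw [Finset.mem_union] at hB
    rcases hB with hB | hB
    · exact (Finset.mem_powersetCard.mp (Finset.mem_filter.mp hB).1).2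
    · rw [Finset.mem_biUnion] at hB
      obtain ⟨a, _, hB⟩ := hB
      exact (Finset.mem_powersetCard.mp hB).2
  · intro X hX1 hX2
    by_cases hiso : ∃ a, a + m < n ∧ (X ∩ seWin n m a).card = 1
    · -- some window isolates a point of X; use a window block
      obtain ⟨a, ha, hone⟩ := hiso
      obtain ⟨p, hp⟩ := Finset.card_eq_one.mp hone
      have hpX : p ∈ X := (Finset.mem_inter.mp (hp ▸ Finset.mem_singleton_self p)).1
      have hpW : p ∈ seWin n m a := (Finset.mem_inter.mp (hp ▸ Finset.mem_singleton_self p)).2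
      have hsub : X.erase p ⊆ Finset.univ \ seWin n m a := by
        intro y hy
        rw [Finset.mem_sdiff]
        refine ⟨Finset.mem_univ y, fun hyW => ?_⟩
        have hym : y ∈ X ∩ seWin n m a :=
          Finset.mem_inter.mpr ⟨Finset.mem_of_mem_erase hy, hyW⟩
        rw [hp, Finset.mem_singleton] at hym
        exact (Finset.ne_of_mem_erase hy) hym
      have hcard1 : (X.erase p).card ≤ t := by
        rw [Finset.card_erase_of_mem hpX]; omega
      have hcard2 : t ≤ (Finset.univ \ seWin n m a).card := by
        rw [Finset.card_sdiff_of_subset (Finset.subset_univ _), seWin_card ha, Finset.card_univ,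
          Fintype.card_fin]
        omega
      obtain ⟨B, hB1, hB2, hB3⟩ := Finset.exists_subsuperset_card_eq hsub hcard1 hcard2
      refine ⟨B, ?_, ?_⟩
      · apply Finset.mem_union_right
        rw [Finset.mem_biUnion]
        exact ⟨a, Finset.mem_range.mpr (by omega),
          Finset.mem_powersetCard.mpr ⟨hB2, hB3⟩⟩
      · have hXB : X \ B = {p} := by
          ext y
          rw [Finset.mem_sdiff, Finset.mem_singleton]
          constructor
          · rintro ⟨hyX, hyB⟩
            by_contra hne
            exact hyB (hB1 (Finset.mem_erase.mpr ⟨hne, hyX⟩))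
          · rintro rfl
            refine ⟨hpX, fun hpB => ?_⟩
            have hm' := hB2 hpB
            rw [Finset.mem_sdiff] at hm'
            exact hm'.2 hpW
        rw [hXB, Finset.card_singleton]
    · -- no window isolates: X is dense, use the residue family
      push_neg at hiso
      have hXne : X.Nonempty := Finset.card_pos.mp (by omega)
      have hml : m * l ≤ n := by rw [hm]; exact Nat.div_mul_le_self n l
      have hdens : ∀ ρ, ρ < l → ∃ x ∈ X, seW n l x = ρ :=
        fun ρ hρ => seDense hl hml X hXne (fun a ha => hiso a ha) hρ
      have hCex : t + 1 - X.card ≤ (Finset.univ \ X).card := by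
        rw [Finset.card_sdiff_of_subset (Finset.subset_univ _), Finset.card_univ, Fintype.card_fin]
        omega
      obtain ⟨C, hCsub, hCcard⟩ := Finset.exists_subset_card_eq hCex
      have hCX : ∀ y ∈ C, y ∉ X := by
        intro y hy
        have := hCsub hy
        rw [Finset.mem_sdiff] at this
        exact this.2
      obtain ⟨σ, hσ⟩ : ∃ σ, (∑ y ∈ X, seW n l y) + (∑ y ∈ C, seW n l y) = σ := ⟨_, rfl⟩
      obtain ⟨x, hxX, hxw⟩ := hdens ((σ + (l - c)) % l) (Nat.mod_lt _ hl)
      have hdisj : Disjoint (X.erase x) C := by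
        rw [Finset.disjoint_right]
        intro y hyC hyE
        exact hCX y hyC (Finset.mem_of_mem_erase hyE)
      have hxC : x ∉ C := fun h => hCX x h hxX
      have hxT : x ∉ (X.erase x) ∪ C := by
        rw [Finset.mem_union]
        rintro (h | h)
        · exact (Finset.mem_erase.mp h).1 rfl
        · exact hxC h
      have hTcard : ((X.erase x) ∪ C).card = t := by
        rw [Finset.card_union_of_disjoint hdisj, Finset.card_erase_of_mem hxX, hCcard]
        omega
      obtain ⟨s, hs⟩ : ∃ s, (∑ y ∈ (X.erase x) ∪ C, seW n l y) = s := ⟨_, rfl⟩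
      have hTsum : s + (σ + (l - c)) % l = σ := by
        rw [← hs, Finset.sum_union hdisj, ← hxw]
        have h1 : (∑ y ∈ X.erase x, seW n l y) + seW n l x = ∑ y ∈ X, seW n l y :=
          Finset.sum_erase_add X _ hxX
        omega
      have hmod : s % l = c := by
        have h1 : (c + (σ + (l - c)) % l) % l = σ % l := by
          have h2 : (c + (σ + (l - c)) % l) % l = (c + (σ + (l - c))) % l :=
            Nat.ModEq.add_left c (Nat.mod_modEq _ l)
          have h3 : c + (σ + (l - c)) = σ + l := by omega
          rw [h2, h3, Nat.add_mod_right]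
        have h4 : (s + (σ + (l - c)) % l) % l = σ % l := by rw [hTsum]
        have h5 : Nat.ModEq l (c + (σ + (l - c)) % l) (s + (σ + (l - c)) % l) := by
          unfold Nat.ModEq
          rw [h1, h4]
        have h6 : Nat.ModEq l c s := by
          have := Nat.ModEq.add_right_cancel' ((σ + (l - c)) % l) h5
          exact this
        have h7 : c % l = s % l := h6
        rw [← h7, Nat.mod_eq_of_lt hc]
      refine ⟨(X.erase x) ∪ C, ?_, ?_⟩
      · apply Finset.mem_union_left
        apply Finset.mem_filter.mpr
        exact ⟨Finset.mem_powersetCard.mpr ⟨Finset.subset_univ _, hTcard⟩, by rw [hs, hmod]⟩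
      · have hXT : X \ ((X.erase x) ∪ C) = {x} := by
          ext y
          rw [Finset.mem_sdiff, Finset.mem_singleton, Finset.mem_union]
          constructor
          · rintro ⟨hyX, hyT⟩
            by_contra hne
            exact hyT (Or.inl (Finset.mem_erase.mpr ⟨hne, hyX⟩))
          · rintro rfl
            exact ⟨hxX, hxT.elim ∘ Finset.mem_union.mpr⟩
        rw [hXT, Finset.card_singleton]

theorem stmt4 (n t l : ℕ) (ht : 0 < t) (htn : t + 2 < n)
    (hl1 : (n : ℝ) / ((n : ℝ) - (t : ℝ) - 2) ≤ (l : ℝ)) (hl2 : l ≤ n) :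
    (SENumber n t : ℝ) ≤ (1 / (l : ℝ)) * (n.choose t : ℝ) +
      (l : ℝ) * (((n + l - 1) / l : ℕ) : ℝ) * ((n - n / l - 1).choose t : ℝ) := by
  classical
  have hn0 : 0 < n := by omega
  have hden : (0 : ℝ) < (n : ℝ) - t - 2 := by
    have : ((t : ℝ) + 2) < (n : ℝ) := by exact_mod_cast htn
    linarith
  have hnpos : (0 : ℝ) < (n : ℝ) := by exact_mod_cast hn0
  have hl0 : 0 < l := by
    by_contra h
    push_neg at h
    interval_cases l
    · have : (0 : ℝ) < (n : ℝ) / ((n : ℝ) - t - 2) := div_pos hnpos hden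
      simp at hl1
      linarith
  have hlpos : (0 : ℝ) < (l : ℝ) := by exact_mod_cast hl0
  -- n ≤ l * (n - t - 2) in ℕ
  have hnl : (n : ℝ) ≤ (l : ℝ) * ((n : ℝ) - t - 2) := by
    rw [div_le_iff₀ hden] at hl1
    linarith
  have hnlN : n ≤ l * (n - t - 2) := by
    have hcast : ((l * (n - t - 2) : ℕ) : ℝ) = (l : ℝ) * ((n : ℝ) - t - 2) := by
      rw [Nat.cast_mul, Nat.sub_sub, Nat.cast_sub (by omega : t + 2 ≤ n)]
      push_cast
      ring
    exact_mod_cast hcast ▸ hnl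
  obtain ⟨m, hmdef⟩ : ∃ m, n / l = m := ⟨_, rfl⟩
  obtain ⟨q, hq⟩ : ∃ q, (n + l - 1) / l = q := ⟨_, rfl⟩
  rw [hmdef, hq]
  have hm2 : m ≤ n - t - 2 := by
    rw [← hmdef]
    calc n / l ≤ (l * (n - t - 2)) / l := Nat.div_le_div_right hnlN
      _ = n - t - 2 := Nat.mul_div_cancel_left _ hl0
  have hmt : m + t + 2 ≤ n := by omega
  obtain ⟨c, hc, hAc⟩ := seA_small n t l hl0
  set S : Finset (Finset (Fin n)) :=
    (seA n t l c) ∪ (Finset.range (n - m)).biUnion (fun a => seD n t m a) with hS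
  have hSE : IsSESystem n t S := se_system n t l m c hl0 hmdef.symm hmt hc
  have h1 : SENumber n t ≤ S.card := Nat.sInf_le ⟨S, hSE, rfl⟩
  -- card bound
  have h2 : S.card ≤ (seA n t l c).card + (n - m) * ((n - m - 1).choose t) := by
    calc S.card ≤ (seA n t l c).card
          + ((Finset.range (n - m)).biUnion (fun a => seD n t m a)).card :=
        Finset.card_union_le _ _
      _ ≤ (seA n t l c).card + ∑ a ∈ Finset.range (n - m), (seD n t m a).card := by
        exact Nat.add_le_add_left (Finset.card_biUnion_le) _
      _ ≤ (seA n t l c).card + (n - m) * ((n - m - 1).choose t) := by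
        apply Nat.add_le_add_left
        have hsc : ∀ a ∈ Finset.range (n - m), (seD n t m a).card = (n - m - 1).choose t := by
          intro a ha
          rw [Finset.mem_range] at ha
          exact seD_card (by omega)
        rw [Finset.sum_congr rfl hsc, Finset.sum_const, Finset.card_range, smul_eq_mul]
  have hceil : n ≤ l * q := by
    have hd2 := Nat.div_add_mod (n + l - 1) l
    rw [hq] at hd2
    have hd3 : (n + l - 1) % l < l := Nat.mod_lt _ hl0
    omega
  have h3 : (n - m) * ((n - m - 1).choose t) ≤ l * q * ((n - m - 1).choose t) :=
    Nat.mul_le_mul_right _ (by omega)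
  have hA : ((seA n t l c).card : ℝ) ≤ 1 / (l : ℝ) * (n.choose t : ℝ) := by
    rw [div_mul_eq_mul_div, one_mul, le_div_iff₀ hlpos]
    have := hAc
    rw [Nat.mul_comm] at this
    exact_mod_cast this
  calc (SENumber n t : ℝ) ≤ (S.card : ℝ) := by exact_mod_cast h1
    _ ≤ ((seA n t l c).card : ℝ) + (((n - m) * ((n - m - 1).choose t) : ℕ) : ℝ) := by
        exact_mod_cast h2
    _ ≤ 1 / (l : ℝ) * (n.choose t : ℝ) + ((l * q * ((n - m - 1).choose t) : ℕ) : ℝ) := by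
        apply add_le_add hA
        exact_mod_cast h3
    _ = 1 / (l : ℝ) * (n.choose t : ℝ) + (l : ℝ) * (q : ℝ) * ((n - m - 1).choose t : ℝ) := by
        push_cast
        ring
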